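/- Let w > 0, ℓ > 0, τ with 0 < τ < 1/ℓ, and let f : ℝ → ℝ be continuously differentiable on [0, w] with f(0) = 0. Define β(y) = f(y)/(ℓτ) + f'(y)/τ. Then ∫₀^w τ·e^{-x/ℓ}·β(w - x) dx = f(w). -/

import Mathlib

open Real MeasureTheory intervalIntegral

/-- Unbiasedness of the continuous Sample-and-Hold estimator in the regime `τℓ < 1`:
a key of weight `w` has counted value `w - x` with density `τ e^{-x/ℓ}` for `x ∈ (0, w)`,
and the estimator uses `β(y) = f(y)/(ℓτ) + f'(y)/τ`. -/
theorem stmt_1 (w ℓ τ : ℝ) (hw : 0 < w) (hℓ : 0 < ℓ) (hτ : 0 < τ) (hτℓ : τ < 1 / ℓ)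
    (f f' : ℝ → ℝ)
    (hderiv : ∀ x ∈ Set.Icc (0:ℝ) w, HasDerivAt f (f' x) x)
    (hcont : ContinuousOn f' (Set.Icc (0:ℝ) w)) (hf0 : f 0 = 0) :
    ∫ x in (0:ℝ)..w, τ * Real.exp (-x / ℓ) * (f (w - x) / (ℓ * τ) + f' (w - x) / τ)
      = f w := by
  have hℓ' : ℓ ≠ 0 := hℓ.ne'
  have hτ' : τ ≠ 0 := hτ.ne'
  set g : ℝ → ℝ := fun x => -(Real.exp (-x / ℓ) * f (w - x)) with hg
  have hmem : ∀ x ∈ Set.uIcc (0:ℝ) w, w - x ∈ Set.Icc (0:ℝ) w := by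
    intro x hx
    rw [Set.uIcc_of_le hw.le] at hx
    exact ⟨by linarith [hx.2], by linarith [hx.1]⟩
  have hgderiv : ∀ x ∈ Set.uIcc (0:ℝ) w,
      HasDerivAt g (τ * Real.exp (-x / ℓ) * (f (w - x) / (ℓ * τ) + f' (w - x) / τ)) x := by
    intro x hx
    have h1 : HasDerivAt (fun x : ℝ => Real.exp (-x / ℓ))
        (Real.exp (-x / ℓ) * (-1 / ℓ)) x := by
      have : HasDerivAt (fun x : ℝ => -x / ℓ) (-1 / ℓ) x := by
        simpa using ((hasDerivAt_id x).neg.div_const ℓ)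
      exact this.exp
    have h2 : HasDerivAt (fun x : ℝ => f (w - x)) (f' (w - x) * (-1)) x := by
      have hin : HasDerivAt (fun x : ℝ => w - x) (-1) x := by
        simpa using (hasDerivAt_id x).const_sub w
      exact (hderiv _ (hmem x hx)).comp x hin
    have : HasDerivAt (fun x => -(Real.exp (-x / ℓ) * f (w - x))) _ x := (h1.mul h2).neg
    convert this using 1
    field_simp
    ring
  have hcontf : ContinuousOn f (Set.Icc (0:ℝ) w) :=
    fun x hx => (hderiv x hx).continuousAt.continuousWithinAt
  have hcontI : ContinuousOn
      (fun x => τ * Real.exp (-x / ℓ) * (f (w - x) / (ℓ * τ) + f' (w - x) / τ))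
      (Set.uIcc (0:ℝ) w) := by
    have hsub : ContinuousOn (fun x : ℝ => w - x) (Set.uIcc (0:ℝ) w) :=
      (continuous_const.sub continuous_id).continuousOn
    refine ContinuousOn.mul ?_ ?_
    · exact (continuous_const.mul ((continuous_id.neg.div_const ℓ).rexp)).continuousOn
    · exact ((hcontf.comp hsub hmem).div_const _).add
        ((hcont.comp hsub hmem).div_const _)
  have hint := intervalIntegral.integral_eq_sub_of_hasDerivAt hgderiv
    (hcontI.intervalIntegrable)
  rw [hint]
  simp [hg, hf0]
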